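/- The number of equivalence classes, under rotation at the root, of planar rooted trees with n+1 nodes equals (1/(2n)) * Σ_{d | n} φ(n/d) * C(2d, d). -/

import Mathlib

/-- A planar rooted tree: a root with a linearly ordered list of subtrees. -/
inductive PlanarTree : Type
  | node : List PlanarTree → PlanarTree

namespace PlanarTree

mutual
  /-- The number of nodes of a planar rooted tree. -/
  def numNodes : PlanarTree → ℕ
    | .node ts => 1 + numNodesList ts
  /-- The total number of nodes of a list of planar rooted trees. -/
  def numNodesList : List PlanarTree → ℕ
    | [] => 0
    | t :: ts => numNodes t + numNodesList ts
end

/-- The list of subtrees attached to the root. -/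
def children : PlanarTree → List PlanarTree
  | .node ts => ts

end PlanarTree

/-- Two planar rooted trees are related by rotation at the root if one is obtained
from the other by cyclically permuting the subtrees attached to the root. -/
def RootRotRel (n : ℕ) (T T' : {T : PlanarTree // T.numNodes = n + 1}) : Prop :=
  ∃ k : ℕ, T'.1 = PlanarTree.node ((PlanarTree.children T.1).rotate k)

section Aux
open List DyckStep

namespace PlanarTree

mutual
  /-- Dyck word of a tree (word of its children list). -/
  def toD : PlanarTree → DyckWord
    | .node ts => listD ts
  /-- Dyck word of a list of trees: concatenation of nested blocks. -/
  def listD : List PlanarTree → DyckWord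
    | [] => 0
    | t :: ts => (toD t).nest + listD ts
end

mutual
  theorem semilength_toD (t : PlanarTree) : (toD t).semilength + 1 = t.numNodes := by
    cases t with
    | node ts => rw [toD, numNodes, semilength_listD, Nat.add_comm]
  theorem semilength_listD (ts : List PlanarTree) :
      (listD ts).semilength = numNodesList ts := by
    cases ts with
    | nil => rw [listD, numNodesList]; rfl
    | cons t ts =>
        rw [listD, numNodesList, DyckWord.semilength_add, DyckWord.semilength_nest,
          semilength_listD ts, ← semilength_toD t, Nat.add_comm _ 1]
end

theorem listD_ne_zero {t : PlanarTree} {ts : List PlanarTree} : listD (t :: ts) ≠ 0 := by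
  intro h
  rw [listD] at h
  have : ((toD t).nest + listD ts).toList = [] := by rw [h]; rfl
  change (toD t).nest.toList ++ (listD ts).toList = [] at this
  have h2 := List.append_eq_nil_iff.mp (by exact_mod_cast this)
  exact DyckWord.nest_ne_zero (DyckWord.toList_eq_nil.mp h2.1)

mutual
  theorem toD_injective : ∀ t u : PlanarTree, toD t = toD u → t = u
    | .node ts, .node us, h => by
        rw [toD, toD] at h
        rw [listD_injective ts us h]
  theorem listD_injective : ∀ ts us : List PlanarTree, listD ts = listD us → ts = us
    | [], [], _ => rfl
    | [], u :: us, h => absurd h.symm listD_ne_zero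
    | t :: ts, [], h => absurd h listD_ne_zero
    | t :: ts, u :: us, h => by
        rw [listD, listD] at h
        have h1 : (toD t).nest.insidePart = (toD u).nest.insidePart := by
          rw [← DyckWord.insidePart_add (q := listD ts) (DyckWord.nest_ne_zero), h,
            DyckWord.insidePart_add (q := listD us) (DyckWord.nest_ne_zero)]
        rw [DyckWord.insidePart_nest, DyckWord.insidePart_nest] at h1
        have ht : t = u := toD_injective t u h1
        have h2 : listD ts = listD us := by
          apply add_left_cancel (a := (toD t).nest)
          nth_rewrite 2 [ht]
          exact h
        rw [ht, listD_injective ts us h2]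
end

theorem listD_surjective (p : DyckWord) : ∃ ts, listD ts = p := by
  by_cases hp : p = 0
  · exact ⟨[], by rw [listD, hp]⟩
  · obtain ⟨a, ha⟩ := listD_surjective p.insidePart
    obtain ⟨b, hb⟩ := listD_surjective p.outsidePart
    exact ⟨node a :: b, by
      rw [listD, toD, ha, hb, DyckWord.nest_insidePart_add_outsidePart hp]⟩
  termination_by p.semilength
  decreasing_by
  · exact DyckWord.semilength_insidePart_lt hp
  · exact DyckWord.semilength_outsidePart_lt hp

theorem listD_append (a b : List PlanarTree) : listD (a ++ b) = listD a + listD b := by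
  induction a with
  | nil => rw [List.nil_append, listD, zero_add]
  | cons t ts ih => rw [List.cons_append, listD, listD, ih, add_assoc]

end PlanarTree


namespace DyckWord
@[simp] lemma toList_add' (p q : DyckWord) : (p + q).toList = p.toList ++ q.toList := rfl
@[simp] lemma toList_nest' (p : DyckWord) : p.nest.toList = U :: (p.toList ++ [D]) := rfl
@[simp] lemma toList_zero' : (0 : DyckWord).toList = [] := rfl

theorem balanced_of_parts (p q : DyckWord) (x y : List DyckStep)
    (hp : p.toList = x ++ y) (hq : q.toList = y ++ x) : x.count U = x.count D := by
  have hx : (x.count D) ≤ x.count U := by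
    have := p.count_D_le_count_U x.length
    rwa [hp, List.take_left] at this
  have hy : (y.count D) ≤ y.count U := by
    have := q.count_D_le_count_U y.length
    rwa [hq, List.take_left] at this
  have ht := p.count_U_eq_count_D
  rw [hp, List.count_append, List.count_append] at ht
  omega
end DyckWord
namespace PlanarTree

theorem balanced_prefix_listD : ∀ (ts : List PlanarTree) (x : List DyckStep),
    x <+: (listD ts).toList → x.count U = x.count D →
    ∃ j, j ≤ ts.length ∧ x = (listD (ts.take j)).toList
  | [], x, hpre, _ => by
      rw [listD, DyckWord.toList_zero'] at hpre
      exact ⟨0, Nat.zero_le _, by simpa [listD] using List.prefix_nil.mp hpre⟩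
  | t :: rest, x, hpre, hbal => by
      have hl : (listD (t :: rest)).toList
          = (toD t).nest.toList ++ (listD rest).toList := by rw [listD]; rfl
      set B := (toD t).nest.toList with hB
      by_cases hlen : B.length ≤ x.length
      · -- B is a prefix of x
        have hBpre : B <+: (listD (t :: rest)).toList := by rw [hl]; exact List.prefix_append _ _
        have hBx : B <+: x := List.prefix_of_prefix_length_le hBpre hpre hlen
        obtain ⟨x₂, hx₂⟩ := hBx
        have hx₂pre : x₂ <+: (listD rest).toList := by
          rw [hl, ← hx₂] at hpre
          exact (List.prefix_append_right_inj B).mp hpre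
        have hBbal : B.count U = B.count D := (toD t).nest.count_U_eq_count_D
        have hx₂bal : x₂.count U = x₂.count D := by
          rw [← hx₂, List.count_append, List.count_append] at hbal; omega
        obtain ⟨j, hj, hjx⟩ := balanced_prefix_listD rest x₂ hx₂pre hx₂bal
        refine ⟨j + 1, by simp only [List.length_cons]; omega, ?_⟩
        rw [List.take_succ_cons, listD]
        rw [← hx₂, hjx]; rfl
      · -- x is shorter than the first block: must be empty
        push_neg at hlen
        rcases x with _ | ⟨s, z⟩
        · exact ⟨0, Nat.zero_le _, rfl⟩
        · exfalso
          rw [hl, hB, DyckWord.toList_nest'] at hpre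
          obtain ⟨r, hr⟩ := hpre
          rw [List.cons_append] at hr
          obtain ⟨hs, hzr⟩ := List.cons_eq_cons.mp hr
          subst hs
          have hBlen : B.length = (toD t).toList.length + 2 := by
            rw [hB, DyckWord.toList_nest']; simp
          have hzlen : z.length ≤ (toD t).toList.length := by
            simp only [List.length_cons] at hlen; omega
          have hzt : z = (toD t).toList.take z.length := by
            have h1 : z = ((toD t).toList ++ [D] ++ (listD rest).toList).take z.length := by
              simp only [List.append_eq, ← List.append_assoc] at hzr
              rw [← hzr, List.take_left]
            rw [List.take_append_of_le_length (by simp; omega),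
              List.take_append_of_le_length hzlen] at h1
            exact h1
          have hcnt := (toD t).count_D_le_count_U z.length
          rw [← hzt] at hcnt
          simp only [List.count_cons] at hbal
          simp at hbal
          omega

theorem rotate_listD_eq (ts : List PlanarTree) (q : DyckWord) (m : ℕ)
    (h : q.toList = (listD ts).toList.rotate m) : ∃ k, q = listD (ts.rotate k) := by
  set l := (listD ts).toList with hldef
  by_cases hl : l = []
  · have hts : ts = [] := by
      cases ts with
      | nil => rfl
      | cons t ts => exact absurd (DyckWord.toList_eq_nil.mp hl) listD_ne_zero
    refine ⟨0, ?_⟩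
    apply DyckWord.ext
    rw [h, hl, List.rotate_nil, List.rotate_zero, hts, listD, DyckWord.toList_zero']
  · set m' := m % l.length with hm'
    have hmlt : m' < l.length := Nat.mod_lt _ (List.length_pos_iff.mpr hl)
    have hrot : l.rotate m = l.rotate m' := (List.rotate_mod l m).symm
    have hq : q.toList = l.drop m' ++ l.take m' := by
      rw [h, hrot, List.rotate_eq_drop_append_take hmlt.le]
    set x := l.take m' with hx
    set y := l.drop m' with hy
    have hp : (listD ts).toList = x ++ y := (List.take_append_drop m' l).symm
    have hbal : x.count U = x.count D :=
      DyckWord.balanced_of_parts (listD ts) q x y hp hq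
    obtain ⟨j, hj, hjx⟩ := balanced_prefix_listD ts x (hp ▸ List.prefix_append x y) hbal
    have hsplit : (listD ts).toList
        = (listD (ts.take j)).toList ++ (listD (ts.drop j)).toList := by
      conv_lhs => rw [← List.take_append_drop j ts]
      rw [listD_append]; rfl
    have hyeq : y = (listD (ts.drop j)).toList := by
      apply List.append_cancel_left (as := x)
      rw [← hp, hsplit, hjx]
    refine ⟨j, ?_⟩
    apply DyckWord.ext
    rw [hq, List.rotate_eq_drop_append_take hj, listD_append, DyckWord.toList_add',
      hyeq, ← hjx]

theorem listD_rotate (ts : List PlanarTree) (k : ℕ) :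
    ∃ m, (listD (ts.rotate k)).toList = (listD ts).toList.rotate m := by
  by_cases hts : ts = []
  · exact ⟨0, by rw [hts, List.rotate_nil, List.rotate_zero]⟩
  · set k' := k % ts.length with hk'
    have hklt : k' < ts.length := Nat.mod_lt _ (List.length_pos_iff.mpr hts)
    refine ⟨(listD (ts.take k')).toList.length, ?_⟩
    have h1 : ts.rotate k = ts.drop k' ++ ts.take k' := by
      rw [← List.rotate_mod, List.rotate_eq_drop_append_take hklt.le]
    have h2 : (listD ts).toList
        = (listD (ts.take k')).toList ++ (listD (ts.drop k')).toList := by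
      conv_lhs => rw [← List.take_append_drop k' ts]
      rw [listD_append]; rfl
    rw [h1, listD_append, DyckWord.toList_add', h2,
      List.rotate_eq_drop_append_take (by simp), List.drop_left, List.take_left]

end PlanarTree


section CycleLemma
open List DyckStep

lemma count_take_add' (w : List DyckStep) (a b : ℕ) (s : DyckStep) :
    (w.take (a+b)).count s = (w.take a).count s + ((w.drop a).take b).count s := by
  rw [List.take_add, List.count_append]

/-- Cycle lemma: every balanced word has a rotation which is a Dyck word. -/
theorem exists_dyck_rotation (w : List DyckStep) (hbal : w.count U = w.count D) :
    ∃ (m : ℕ) (p : DyckWord), p.toList = w.rotate m := by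
  set L := w.length with hL
  have hne : (Finset.range (L+1)).Nonempty := ⟨0, by simp⟩
  obtain ⟨i₀, hi₀mem, hmax⟩ := Finset.exists_max_image (Finset.range (L+1))
    (fun i => ((w.take i).count D : ℤ) - (w.take i).count U) hne
  have hi₀ : i₀ ≤ L := Nat.lt_succ_iff.mp (Finset.mem_range.mp hi₀mem)
  have hmax' : ∀ j, j ≤ L →
      ((w.take j).count D : ℤ) - (w.take j).count U
        ≤ ((w.take i₀).count D : ℤ) - (w.take i₀).count U := fun j hj =>
    hmax j (Finset.mem_range.mpr (by omega))
  have hwtake : w.take L = w := by rw [hL, List.take_length]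
  have hrot : w.rotate i₀ = w.drop i₀ ++ w.take i₀ :=
    List.rotate_eq_drop_append_take hi₀
  have hlen : (w.rotate i₀).length = L := by rw [List.length_rotate]
  have hcount : ∀ s, (w.rotate i₀).count s = w.count s :=
    fun s => ((List.rotate_perm w i₀).count_eq s)
  refine ⟨i₀, ⟨w.rotate i₀, by rw [hcount, hcount, hbal], ?_⟩, rfl⟩
  intro i
  by_cases hiL : L ≤ i
  · rw [List.take_of_length_le (by omega)]
    rw [hcount, hcount, hbal]
  · push_neg at hiL
    by_cases hc : i ≤ L - i₀
    · -- prefix inside the dropped part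
      have htk : (w.rotate i₀).take i = (w.drop i₀).take i := by
        rw [hrot, List.take_append_of_le_length (by rw [List.length_drop]; omega)]
      have hU := count_take_add' w i₀ i U
      have hD := count_take_add' w i₀ i D
      have hm := hmax' (i₀ + i) (by omega)
      rw [htk]
      omega
    · push_neg at hc
      set j := i - (L - i₀) with hj
      have hij : i = (L - i₀) + j := by omega
      have hjle : j ≤ i₀ := by omega
      have htk : (w.rotate i₀).take i = w.drop i₀ ++ w.take j := by
        rw [hrot, hij, ← List.length_drop, List.take_append,
          List.take_take, Nat.add_sub_cancel_left, min_eq_left hjle,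
          List.take_of_length_le (by omega)]
      have hsplit : ∀ s : DyckStep, w.count s = (w.take i₀).count s + (w.drop i₀).count s := by
        intro s
        conv_lhs => rw [← List.take_append_drop i₀ w]
        rw [List.count_append]
      have hU := hsplit U
      have hD := hsplit D
      have hm := hmax' j (by omega)
      rw [htk, List.count_append, List.count_append]
      omega

end CycleLemma

lemma count_U_add_count_D (l : List DyckStep) : l.count U + l.count D = l.length := by
  induction l with
  | nil => rfl
  | cons s t ih => cases s <;> simp [List.count_cons] <;> omega

section Quotients
open List DyckStep PlanarTree

@[simp] lemma PlanarTree.children_node (ts : List PlanarTree) :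
    (PlanarTree.node ts).children = ts := rfl


variable (n : ℕ)

/-- Dyck words of semilength n. -/
def DyckN := {p : DyckWord // p.semilength = n}

/-- Rotation relation on Dyck words. -/
def dyckRel (p q : DyckN n) : Prop := ∃ m, q.1.toList = p.1.toList.rotate m

/-- Necklaces: words of length 2n with n Us. -/
def Neck := {w : List DyckStep // w.length = 2*n ∧ w.count U = n}

/-- Rotation relation on necklaces. -/
def neckRel (w w' : Neck n) : Prop := ∃ m, w'.1 = w.1.rotate m

lemma rotate_inv {α : Type*} (l : List α) (m : ℕ) : ∃ k, (l.rotate m).rotate k = l := by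
  rcases eq_or_ne l [] with h | h
  · exact ⟨0, by rw [h, List.rotate_nil, List.rotate_nil]⟩
  · have hpos : 0 < l.length := List.length_pos_iff.mpr h
    refine ⟨l.length - m % l.length, ?_⟩
    rw [← List.rotate_mod l m, List.rotate_rotate,
      Nat.add_sub_cancel' (Nat.mod_lt _ hpos).le, List.rotate_length]

lemma neckRel_equivalence : Equivalence (neckRel n) where
  refl w := ⟨0, (w.1.rotate_zero).symm⟩
  symm := by
    rintro w w' ⟨m, hm⟩
    obtain ⟨k, hk⟩ := rotate_inv w.1 m
    exact ⟨k, by rw [hm, hk]⟩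
  trans := by
    rintro a b c ⟨m, hm⟩ ⟨k, hk⟩
    exact ⟨m + k, by rw [hk, hm, List.rotate_rotate]⟩

/-- The tree-to-Dyck equivalence. -/
noncomputable def treeDyckEquiv : {T : PlanarTree // T.numNodes = n + 1} ≃ DyckN n := by
  apply Equiv.ofBijective (f := fun T => ⟨listD T.1.children, by
    obtain ⟨t, ht⟩ := T
    cases t with
    | node ts =>
      rw [children_node, semilength_listD]
      rw [numNodes] at ht
      omega⟩)
  constructor
  · rintro ⟨t, ht⟩ ⟨u, hu⟩ h
    cases t with | node ts => cases u with | node us =>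
      have h' : listD ts = listD us := by
        simpa [children_node] using congrArg Subtype.val h
      simp only [Subtype.mk.injEq]
      rw [listD_injective _ _ h']
  · rintro ⟨p, hp⟩
    obtain ⟨ts, hts⟩ := listD_surjective p
    refine ⟨⟨node ts, ?_⟩, ?_⟩
    · rw [numNodes, ← semilength_listD, hts, hp, Nat.add_comm]
    · simp only [Subtype.mk.injEq, children_node, hts]; rfl

lemma rootRot_iff_dyckRel (T T' : {T : PlanarTree // T.numNodes = n + 1}) :
    RootRotRel n T T' ↔ dyckRel n (treeDyckEquiv n T) (treeDyckEquiv n T') := by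
  constructor
  · rintro ⟨k, hk⟩
    show ∃ m, (listD T'.1.children).toList = (listD T.1.children).toList.rotate m
    rw [hk, children_node]
    exact listD_rotate _ k
  · rintro ⟨m, hm⟩
    change (listD T'.1.children).toList = (listD T.1.children).toList.rotate m at hm
    obtain ⟨k, hk⟩ := rotate_listD_eq T.1.children _ m hm
    refine ⟨k, ?_⟩
    have := listD_injective _ _ hk
    rw [← this]
    obtain ⟨t, ht⟩ := T'
    cases t with | node ts => rfl

/-- Inclusion of Dyck words into necklaces. -/
def dyckToNeck : DyckN n → Neck n := fun p =>
  ⟨p.1.toList, by rw [← p.1.two_mul_semilength_eq_length, p.2], by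
    have : p.1.semilength = p.1.toList.count U := rfl
    rw [← this, p.2]⟩

lemma quot_neck_card : Nat.card (Quot (RootRotRel n)) = Nat.card (Quot (neckRel n)) := by
  have e1 : Quot (RootRotRel n) ≃ Quot (dyckRel n) :=
    Quot.congr (treeDyckEquiv n) (rootRot_iff_dyckRel n)
  have hresp : ∀ p q : DyckN n, dyckRel n p q →
      Quot.mk (neckRel n) (dyckToNeck n p) = Quot.mk (neckRel n) (dyckToNeck n q) := by
    rintro p q ⟨m, hm⟩
    exact Quot.sound ⟨m, hm⟩
  set F : Quot (dyckRel n) → Quot (neckRel n) :=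
    Quot.lift (fun p => Quot.mk (neckRel n) (dyckToNeck n p)) hresp with hF
  have hFbij : Function.Bijective F := by
    constructor
    · intro a b
      induction a using Quot.ind with | _ p =>
      induction b using Quot.ind with | _ q =>
      intro h
      simp only [hF, Quot.lift_mk] at h
      have h2 := Quot.eq.mp h
      have h3 := (Equivalence.eqvGen_iff (neckRel_equivalence n)).mp h2
      obtain ⟨m, hm⟩ := h3
      exact Quot.sound ⟨m, hm⟩
    · intro b
      induction b using Quot.ind with | _ w =>
      obtain ⟨m, p, hp⟩ := exists_dyck_rotation w.1 (by
        have h1 := w.2.1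
        have h2 := w.2.2
        have := count_U_add_count_D w.1
        omega)
      have hpn : p.semilength = n := by
        have : p.semilength = p.toList.count U := rfl
        rw [this, hp, (List.rotate_perm w.1 m).count_eq, w.2.2]
      refine ⟨Quot.mk _ ⟨p, hpn⟩, ?_⟩
      simp only [hF, Quot.lift_mk]
      have : Quot.mk (neckRel n) w = Quot.mk (neckRel n) (dyckToNeck n ⟨p, hpn⟩) :=
        Quot.sound ⟨m, hp⟩
      exact this.symm
  rw [Nat.card_congr e1]
  exact Nat.card_eq_of_bijective F hFbij

end Quotients
section Periodic
open List DyckStep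

variable {α : Type*}

lemma rotate_mul_fix {w : List α} {a : ℕ} (h : w.rotate a = w) (k : ℕ) :
    w.rotate (a * k) = w := by
  induction k with
  | zero => simp
  | succ k ih =>
      have : w.rotate (a * k + a) = w := by
        rw [← List.rotate_rotate, ih, h]
      simpa [Nat.mul_succ] using this

lemma rotate_gcd_fix {w : List α} : ∀ (a : ℕ) {b : ℕ}, w.rotate a = w → w.rotate b = w →
    w.rotate (Nat.gcd a b) = w := by
  intro a
  induction a using Nat.strong_induction_on with
  | _ a ih =>
    intro b ha hb
    rcases Nat.eq_zero_or_pos a with rfl | hpos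
    · simpa [Nat.gcd_zero_left] using hb
    · rw [Nat.gcd_rec]
      have hmod : w.rotate (b % a) = w := by
        have h1 : (w.rotate (a * (b / a))).rotate (b % a) = w.rotate b := by
          rw [List.rotate_rotate, Nat.div_add_mod]
        rw [rotate_mul_fix ha (b / a)] at h1
        rw [h1]
        exact hb
      exact ih (b % a) (Nat.mod_lt _ hpos) hmod ha

lemma rotate_fix_iff_gcd {w : List α} {a : ℕ} :
    w.rotate a = w ↔ w.rotate (Nat.gcd a w.length) = w := by
  constructor
  · intro h
    exact rotate_gcd_fix a h (List.rotate_length w)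
  · intro h
    obtain ⟨k, hk⟩ := Nat.gcd_dvd_left a w.length
    rw [hk]
    exact rotate_mul_fix h k

lemma periodic_eq_flatten_replicate : ∀ (e : ℕ) (w : List α) (d : ℕ), 0 < d →
    w.length = e * d → w.rotate d = w → w = List.flatten (List.replicate e (w.take d))
  | 0, w, d, _, hlen, _ => by
      have hw : w = [] := List.length_eq_zero_iff.mp (by omega)
      subst hw
      simp
  | e + 1, w, d, hd, hlen, hfix => by
      have hdle : d ≤ w.length := by nlinarith
      have hw1 : w.drop d ++ w.take d = w := by
        rw [← List.rotate_eq_drop_append_take hdle, hfix]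
      have hw2 : w.take d ++ w.drop d = w := List.take_append_drop d w
      have hlen' : (w.drop d).length = e * d := by
        rw [List.length_drop, hlen]; ring_nf; omega
      rcases Nat.eq_zero_or_pos e with rfl | he
      · have : w.drop d = [] := List.length_eq_zero_iff.mp (by omega)
        rw [← hw2, this]
        simp
      · have hdle' : d ≤ (w.drop d).length := by nlinarith
        have htake : w.take d = (w.drop d).take d := by
          conv_lhs => rw [← hw1]
          rw [List.take_append_of_le_length hdle']
        have hdrop : w.drop d = (w.drop d).drop d ++ w.take d := by
          conv_lhs => rw [← hw1, List.drop_append_of_le_length hdle']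
        have hfix' : (w.drop d).rotate d = w.drop d := by
          rw [List.rotate_eq_drop_append_take hdle', ← htake, ← hdrop]
        have ih := periodic_eq_flatten_replicate e (w.drop d) d hd hlen' hfix'
        rw [List.replicate_succ, List.flatten_cons, ← htake] at *
        conv_lhs => rw [← hw2]
        rw [ih, ← htake]

lemma flatten_replicate_succ' (e : ℕ) (x : List α) :
    List.flatten (List.replicate (e+1) x) = List.flatten (List.replicate e x) ++ x := by
  induction e with
  | zero => simp
  | succ e ih =>
      calc (List.replicate (e+1+1) x).flatten
          = x ++ (List.replicate (e+1) x).flatten := by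
            rw [List.replicate_succ, List.flatten_cons]
        _ = x ++ ((List.replicate e x).flatten ++ x) := by rw [ih]
        _ = (x ++ (List.replicate e x).flatten) ++ x := by rw [List.append_assoc]
        _ = (List.replicate (e+1) x).flatten ++ x := by
            rw [List.replicate_succ, List.flatten_cons]

lemma rotate_flatten_replicate (e : ℕ) (x : List α) :
    (List.flatten (List.replicate e x)).rotate x.length = List.flatten (List.replicate e x) := by
  cases e with
  | zero => simp
  | succ e =>
      rw [List.replicate_succ, List.flatten_cons]
      rw [List.rotate_eq_drop_append_take (by simp), List.drop_left, List.take_left]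
      exact (flatten_replicate_succ' e x).symm

lemma length_flatten_replicate (e : ℕ) (x : List α) :
    (List.flatten (List.replicate e x)).length = e * x.length := by
  induction e with
  | zero => simp
  | succ e ih => rw [List.replicate_succ, List.flatten_cons, List.length_append, ih]; ring

lemma count_flatten_replicate [BEq α] (e : ℕ) (x : List α) (s : α) :
    (List.flatten (List.replicate e x)).count s = e * x.count s := by
  induction e with
  | zero => simp
  | succ e ih => rw [List.replicate_succ, List.flatten_cons, List.count_append, ih]; ring

end Periodic

section WordCount
open List DyckStep

lemma count_ofFn_U : ∀ {d : ℕ} (f : Fin d → DyckStep),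
    (List.ofFn f).count U = (Finset.univ.filter (fun i => f i = U)).card := by
  intro d
  induction d with
  | zero => intro f; simp
  | succ d ih =>
      intro f
      rw [List.ofFn_succ, List.count_cons, ih (fun i => f i.succ),
        Fin.card_filter_univ_succ (fun i : Fin (d+1) => f i = U)]
      rcases (f 0).dichotomy with h | h <;> simp [h]

lemma getD_ofFn {d : ℕ} (f : Fin d → DyckStep) (i : Fin d) :
    (List.ofFn f).getD i.val D = f i := by
  rw [List.getD_eq_getElem _ _ (by simpa using i.isLt), List.getElem_ofFn]

lemma count_U_eq_card (l : List DyckStep) :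
    l.count U = (Finset.univ.filter (fun i : Fin l.length => l.getD i.val D = U)).card := by
  conv_lhs => rw [← List.ofFn_get l]
  rw [count_ofFn_U]
  congr 1
  apply Finset.filter_congr
  intro i _
  rw [List.get_eq_getElem, List.getD_eq_getElem _ _ i.isLt]

lemma card_filter_fin_congr {d d' : ℕ} (h : d = d') (p : ℕ → Prop) [DecidablePred p] :
    (Finset.univ.filter (fun i : Fin d => p i.val)).card
      = (Finset.univ.filter (fun i : Fin d' => p i.val)).card := by
  subst h; rfl

/-- The number of words of length d with exactly c Us. -/
lemma card_words (d c : ℕ) :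
    Nat.card {x : List DyckStep // x.length = d ∧ x.count U = c} = d.choose c := by
  have e : {x : List DyckStep // x.length = d ∧ x.count U = c}
      ≃ {s : Finset (Fin d) // s.card = c} := by
    refine ⟨fun x => ⟨Finset.univ.filter (fun i : Fin d => x.1.getD i.val D = U), ?_⟩,
      fun s => ⟨List.ofFn (fun i : Fin d => if i ∈ s.1 then U else D), by simp, ?_⟩, ?_, ?_⟩
    · rw [← card_filter_fin_congr x.2.1 (fun i => x.1.getD i D = U), ← count_U_eq_card]
      exact x.2.2
    · rw [count_ofFn_U]
      have hfs : (Finset.univ.filter (fun i : Fin d => (if i ∈ s.1 then U else D) = U)) = s.1 := by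
        ext i
        by_cases h : i ∈ s.1 <;> simp [h]
      rw [hfs, s.2]
    · intro x
      apply Subtype.ext
      apply List.ext_getElem (by simp [x.2.1])
      intro i h1 h2
      have hid : i < d := by simpa using h1
      rw [List.getElem_ofFn]
      simp only [Finset.mem_filter, Finset.mem_univ, true_and]
      have hD : x.1.getD i D = x.1[i] := List.getD_eq_getElem x.1 D h2
      rcases (x.1[i]'h2).dichotomy with h | h
      · rw [if_pos (by rw [hD]; exact h)]
        exact h.symm
      · rw [if_neg (by rw [hD, h]; simp)]
        exact h.symm
    · intro s
      apply Subtype.ext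
      ext i
      simp only [Finset.mem_filter, Finset.mem_univ, true_and]
      rw [getD_ofFn (fun i : Fin d => if i ∈ s.1 then U else D) i]
      by_cases h : i ∈ s.1 <;> simp [h]
  rw [Nat.card_congr e, Nat.card_eq_fintype_card, Fintype.card_finset_len, Fintype.card_fin]

end WordCount
section FixedCount
open List DyckStep

instance : Fintype DyckStep := ⟨{U, D}, by intro s; cases s <;> simp⟩

lemma neck_finite (n : ℕ) : Finite (Neck n) := by
  apply Finite.of_injective (f := fun w : Neck n => fun i : Fin (2*n) => w.1.getD i.val D)
  intro w w' h
  apply Subtype.ext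
  apply List.ext_getElem (by rw [w.2.1, w'.2.1])
  intro i h1 h2
  have hi : i < 2*n := by rw [← w.2.1]; exact h1
  have h3 : w.1.getD i D = w'.1.getD i D := congrFun h ⟨i, hi⟩
  rwa [List.getD_eq_getElem w.1 D h1, List.getD_eq_getElem w'.1 D h2] at h3

instance (n : ℕ) : Finite (Neck n) := neck_finite n

/-- Cardinality of the set of necklaces fixed by rotation by `d`. -/
lemma card_fixed (n d : ℕ) (hn : 0 < n) (hd : d ∣ 2*n) (hdpos : 0 < d) :
    Nat.card {w : Neck n // w.1.rotate d = w.1}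
      = if 2 ∣ d then d.choose (d/2) else 0 := by
  obtain ⟨e, hed⟩ : ∃ e, 2 * n = e * d := ⟨2*n/d, (Nat.div_mul_cancel hd).symm⟩
  have hdle : d ≤ 2*n := Nat.le_of_dvd (by omega) hd
  have hepos : 0 < e := by
    rcases Nat.eq_zero_or_pos e with h | h
    · rw [h] at hed; omega
    · exact h
  have key : ∀ w : Neck n, w.1.rotate d = w.1 →
      w.1 = List.flatten (List.replicate e (w.1.take d)) ∧
      n = e * ((w.1.take d).count U) := by
    intro w hw
    have h1 := periodic_eq_flatten_replicate e w.1 d hdpos (by rw [w.2.1, hed]) hw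
    refine ⟨h1, ?_⟩
    have h2 : w.1.count U = e * ((w.1.take d).count U) := by
      conv_lhs => rw [h1]
      exact count_flatten_replicate e _ U
    rw [← h2, w.2.2]
  by_cases hpar : 2 ∣ d
  · rw [if_pos hpar]
    obtain ⟨c, hc⟩ := hpar
    have h2 : 2 * n = 2 * (e * c) := by rw [hed, hc]; ring
    have hnec : n = e * c := by omega
    have hdc : d / 2 = c := by omega
    rw [hdc]
    rw [← card_words d c]
    apply Nat.card_congr
    refine ⟨fun w => ⟨w.1.1.take d, ?_, ?_⟩, fun x => ⟨⟨List.flatten (List.replicate e x.1),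
      ?_, ?_⟩, ?_⟩, ?_, ?_⟩
    · rw [List.length_take, w.1.2.1]
      omega
    · obtain ⟨hr, hcnt⟩ := key w.1 w.2
      have h6 : e * ((w.1.1.take d).count U) = e * c := by omega
      exact Nat.eq_of_mul_eq_mul_left hepos h6
    · rw [length_flatten_replicate, x.2.1]
      omega
    · rw [count_flatten_replicate, x.2.2]
      omega
    · show (List.flatten (List.replicate e x.1)).rotate d = _
      have hrf := rotate_flatten_replicate e x.1
      rwa [x.2.1] at hrf
    · intro w
      apply Subtype.ext
      apply Subtype.ext
      exact (key w.1 w.2).1.symm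
    · intro x
      apply Subtype.ext
      show (List.flatten (List.replicate e x.1)).take d = x.1
      obtain ⟨e', rfl⟩ : ∃ e', e = e' + 1 := ⟨e - 1, by omega⟩
      rw [List.replicate_succ, List.flatten_cons,
        List.take_append_of_le_length (le_of_eq x.2.1.symm),
        List.take_of_length_le (le_of_eq x.2.1)]
  · rw [if_neg hpar]
    have : IsEmpty {w : Neck n // w.1.rotate d = w.1} := by
      constructor
      rintro ⟨w, hw⟩
      obtain ⟨h1, h2⟩ := key w hw
      have h3 : w.1.length = e * d := by rw [w.2.1, hed]
      set cnt := (w.1.take d).count U with hcnt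
      have h4 : e * d = e * (2 * cnt) := by
        have : 2 * (e * cnt) = e * (2 * cnt) := by ring
        omega
      have h5 : d = 2 * cnt := Nat.eq_of_mul_eq_mul_left hepos h4
      exact hpar ⟨_, h5⟩
    simp [Nat.card_of_isEmpty]

end FixedCount
section BurnsideApp
open List DyckStep

instance neckAction (n : ℕ) [NeZero (2*n)] : AddAction (ZMod (2*n)) (Neck n) where
  vadd g w := ⟨w.1.rotate g.val, by rw [List.length_rotate]; exact w.2.1,
    by rw [(List.rotate_perm _ _).count_eq]; exact w.2.2⟩
  zero_vadd w := by
    apply Subtype.ext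
    show w.1.rotate (0 : ZMod (2*n)).val = w.1
    rw [ZMod.val_zero, List.rotate_zero]
  add_vadd g h w := by
    apply Subtype.ext
    show w.1.rotate ((g+h).val) = (w.1.rotate h.val).rotate g.val
    rw [List.rotate_rotate, ZMod.val_add]
    have hl : w.1.length = 2*n := w.2.1
    have h1 : w.1.rotate ((g.val + h.val) % w.1.length) = w.1.rotate (g.val + h.val) :=
      List.rotate_mod _ _
    rw [hl] at h1
    rw [h1, Nat.add_comm]

lemma vadd_neck (n : ℕ) [NeZero (2*n)] (g : ZMod (2*n)) (w : Neck n) :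
    (g +ᵥ w).1 = w.1.rotate g.val := rfl

lemma sum_zmod_val {M : Type*} [AddCommMonoid M] (L : ℕ) (hL : 0 < L) (f : ℕ → M) :
    haveI : NeZero L := ⟨by omega⟩
    ∑ g : ZMod L, f (ZMod.val g) = ∑ i ∈ Finset.range L, f i := by
  cases L with
  | zero => omega
  | succ m => exact Fin.sum_univ_eq_sum_range (fun i => f i) (m+1)

lemma neck_card_mul (n : ℕ) (hn : 0 < n) :
    Nat.card (Quot (neckRel n)) * (2*n)
      = ∑ i ∈ Finset.range (2*n),
          (if 2 ∣ Nat.gcd i (2*n) then (Nat.gcd i (2*n)).choose ((Nat.gcd i (2*n))/2) else 0) := by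
  haveI : NeZero (2*n) := ⟨by omega⟩
  letI : Fintype (Neck n) := Fintype.ofFinite _
  letI : ∀ g : ZMod (2*n), Fintype (AddAction.fixedBy (Neck n) g) := fun g => Fintype.ofFinite _
  letI : Fintype (Quotient (AddAction.orbitRel (ZMod (2*n)) (Neck n))) := Fintype.ofFinite _
  have hB := AddAction.sum_card_fixedBy_eq_card_orbits_mul_card_addGroup (ZMod (2*n)) (Neck n)
  have heq : Quot (neckRel n) ≃ Quotient (AddAction.orbitRel (ZMod (2*n)) (Neck n)) := by
    apply Quot.congrRight
    intro a b
    show neckRel n a b ↔ a ∈ AddAction.orbit (ZMod (2*n)) b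
    constructor
    · rintro ⟨m, hm⟩
      obtain ⟨k, hk⟩ := rotate_inv a.1 m
      refine ⟨(k : ZMod (2*n)), ?_⟩
      apply Subtype.ext
      rw [vadd_neck, ZMod.val_natCast]
      have h1 : b.1.rotate (k % b.1.length) = b.1.rotate k := List.rotate_mod _ _
      rw [b.2.1] at h1
      rw [h1, hm, hk]
    · rintro ⟨g, hg⟩
      have hg' : b.1.rotate g.val = a.1 := congrArg Subtype.val hg
      obtain ⟨k, hk⟩ := rotate_inv b.1 g.val
      exact ⟨k, by rw [← hg', hk]⟩
  have hcard : Nat.card (Quot (neckRel n))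
      = Fintype.card (Quotient (AddAction.orbitRel (ZMod (2*n)) (Neck n))) := by
    rw [Nat.card_congr heq, Nat.card_eq_fintype_card]
  have hfix : ∀ g : ZMod (2*n), Fintype.card (AddAction.fixedBy (Neck n) g)
      = (if 2 ∣ Nat.gcd g.val (2*n) then
          (Nat.gcd g.val (2*n)).choose ((Nat.gcd g.val (2*n))/2) else 0) := by
    intro g
    rw [← Nat.card_eq_fintype_card]
    have e1 : AddAction.fixedBy (Neck n) g ≃ {w : Neck n // w.1.rotate g.val = w.1} := by
      apply Equiv.subtypeEquivRight
      intro w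
      show g +ᵥ w = w ↔ _
      constructor
      · intro h; exact congrArg Subtype.val h
      · intro h; exact Subtype.ext h
    have e2 : {w : Neck n // w.1.rotate g.val = w.1}
        ≃ {w : Neck n // w.1.rotate (Nat.gcd g.val (2*n)) = w.1} := by
      apply Equiv.subtypeEquivRight
      intro w
      have := rotate_fix_iff_gcd (w := w.1) (a := g.val)
      rwa [w.2.1] at this
    rw [Nat.card_congr (e1.trans e2)]
    exact card_fixed n (Nat.gcd g.val (2*n)) hn (Nat.gcd_dvd_right _ _)
      (Nat.gcd_pos_of_pos_right _ (by omega))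
  have hsum : ∑ g : ZMod (2*n), Fintype.card (AddAction.fixedBy (Neck n) g)
      = ∑ i ∈ Finset.range (2*n),
          (if 2 ∣ Nat.gcd i (2*n) then (Nat.gcd i (2*n)).choose ((Nat.gcd i (2*n))/2) else 0) := by
    rw [Finset.sum_congr rfl (fun g _ => hfix g)]
    exact sum_zmod_val (2*n) (by omega)
      (fun i => if 2 ∣ Nat.gcd i (2*n) then (Nat.gcd i (2*n)).choose ((Nat.gcd i (2*n))/2) else 0)
  rw [hcard, ← hsum, hB, ZMod.card]

end BurnsideApp
section Arith

lemma card_filter_gcd (L d : ℕ) (hL : 0 < L) (hd : d ∣ L) :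
    ((Finset.range L).filter (fun i => Nat.gcd i L = d)).card = Nat.totient (L / d) := by
  have hdpos : 0 < d := by
    rcases Nat.eq_zero_or_pos d with rfl | h
    · rw [Nat.zero_dvd] at hd; omega
    · exact h
  rw [Nat.totient]
  apply Finset.card_nbij' (i := fun x => x / d) (j := fun y => y * d)
  · intro x hx
    simp only [Finset.coe_filter, Set.mem_setOf_eq, Finset.mem_filter, Finset.mem_range] at hx ⊢
    obtain ⟨hxL, hgcd⟩ := hx
    have hdx : d ∣ x := hgcd ▸ Nat.gcd_dvd_left x L
    refine ⟨Nat.div_lt_div_of_lt_of_dvd hd hxL, ?_⟩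
    have hco := Nat.coprime_div_gcd_div_gcd (m := x) (n := L) (by rw [hgcd]; exact hdpos)
    rw [hgcd] at hco
    exact hco.symm
  · intro y hy
    simp only [Finset.coe_filter, Set.mem_setOf_eq, Finset.mem_filter, Finset.mem_range] at hy ⊢
    obtain ⟨hyL, hco⟩ := hy
    constructor
    · calc y * d < (L / d) * d := by
            exact Nat.mul_lt_mul_of_lt_of_le hyL (le_refl d) hdpos
        _ = L := Nat.div_mul_cancel hd
    · conv_lhs => rw [← Nat.div_mul_cancel hd]
      rw [Nat.gcd_mul_right]
      have : Nat.gcd y (L / d) = 1 := (Nat.coprime_comm.mp hco)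
      rw [this, one_mul]
  · intro x hx
    simp only [Finset.coe_filter, Set.mem_setOf_eq, Finset.mem_filter, Finset.mem_range] at hx
    have hdx : d ∣ x := hx.2 ▸ Nat.gcd_dvd_left x L
    exact Nat.div_mul_cancel hdx
  · intro y _
    exact Nat.mul_div_cancel _ hdpos

lemma sum_gcd_eq (L : ℕ) (hL : 0 < L) (F : ℕ → ℕ) :
    ∑ i ∈ Finset.range L, F (Nat.gcd i L)
      = ∑ d ∈ L.divisors, Nat.totient (L / d) * F d := by
  rw [← Finset.sum_fiberwise_of_maps_to (g := fun i => Nat.gcd i L) (t := L.divisors)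
    (fun i _ => Nat.mem_divisors.mpr ⟨Nat.gcd_dvd_right i L, hL.ne'⟩)]
  apply Finset.sum_congr rfl
  intro d hd
  have hdvd : d ∣ L := (Nat.mem_divisors.mp hd).1
  have : ∀ i ∈ (Finset.range L).filter (fun i => Nat.gcd i L = d),
      F (Nat.gcd i L) = F d := by
    intro i hi
    rw [(Finset.mem_filter.mp hi).2]
  rw [Finset.sum_congr rfl this, Finset.sum_const, card_filter_gcd L d hL hdvd, smul_eq_mul]

lemma reindex_sum (n : ℕ) (hn : 0 < n) :
    ∑ d ∈ (2*n).divisors, Nat.totient ((2*n) / d) *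
        (if 2 ∣ d then d.choose (d/2) else 0)
      = ∑ d ∈ n.divisors, Nat.totient (n / d) * (2*d).choose d := by
  have h1 : ∑ d ∈ (2*n).divisors, Nat.totient ((2*n) / d) *
        (if 2 ∣ d then d.choose (d/2) else 0)
      = ∑ d ∈ (2*n).divisors.filter (fun d => 2 ∣ d),
          Nat.totient ((2*n) / d) * d.choose (d/2) := by
    rw [Finset.sum_filter]
    apply Finset.sum_congr rfl
    intro d _
    split_ifs with h
    · rfl
    · exact mul_zero _
  rw [h1]
  apply Finset.sum_nbij' (i := fun d => d / 2) (j := fun d => 2 * d)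
  · intro d hd
    simp only [Finset.mem_filter, Nat.mem_divisors] at hd
    obtain ⟨⟨hdvd, _⟩, h2⟩ := hd
    obtain ⟨c, rfl⟩ := h2
    rw [Nat.mul_div_cancel_left c (by norm_num)]
    rw [Nat.mem_divisors]
    exact ⟨(Nat.mul_dvd_mul_iff_left (by norm_num : 0 < 2)).mp hdvd, hn.ne'⟩
  · intro d hd
    simp only [Nat.mem_divisors] at hd
    simp only [Finset.mem_filter, Nat.mem_divisors]
    exact ⟨⟨Nat.mul_dvd_mul_left 2 hd.1, by omega⟩, ⟨d, rfl⟩⟩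
  · intro d hd
    simp only [Finset.mem_filter] at hd
    obtain ⟨c, rfl⟩ := hd.2
    rw [Nat.mul_div_cancel_left c (by norm_num)]
  · intro d _
    rw [Nat.mul_div_cancel_left d (by norm_num)]
  · intro d hd
    simp only [Finset.mem_filter] at hd
    obtain ⟨c, rfl⟩ := hd.2
    rw [Nat.mul_div_cancel_left c (by norm_num),
      Nat.mul_div_mul_left n c (by norm_num)]

theorem neck_count (n : ℕ) (hn : 0 < n) :
    Nat.card (Quot (neckRel n)) * (2*n)
      = ∑ d ∈ n.divisors, Nat.totient (n / d) * (2*d).choose d := by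
  rw [neck_card_mul n hn,
    sum_gcd_eq (2*n) (by omega) (fun d => if 2 ∣ d then d.choose (d/2) else 0),
    reindex_sum n hn]

end Arith


end Aux

/-- the number of planar rooted trees with `n+1` nodes, up to rotation
at the root, equals `(1/(2n)) Σ_{d|n} φ(n/d) C(2d,d)`. -/
theorem stmt_5 (n : ℕ) (hn : 0 < n) :
    Nat.card (Quot (RootRotRel n)) =
      (∑ d ∈ n.divisors, Nat.totient (n / d) * Nat.choose (2 * d) d) / (2 * n) := by
  have h1 := quot_neck_card n
  have h2 := neck_count n hn
  rw [h1]
  exact (Nat.div_eq_of_eq_mul_left (by omega) (by rw [← h2])).symm
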